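/- Suppose the spectral (operator 2-)norm of W − I is at most 2. Let x, x̃ ∈ ℝ^{n₁}, let Λ = (λ_1,…,λ_m) and Λ̃ = (λ̃_1,…,λ̃_m) be tuples in (ℝ^{n₂})^m, let Y = (y_1,…,y_m) satisfy the first-order maximality condition for Φ(X, Λ, ·) with X = (x, x, …, x) (all blocks equal to x), and let Ỹ = (ỹ_1,…,ỹ_m) satisfy the first-order maximality condition for Φ(X̃, Λ̃, ·) with X̃ = (x̃, x̃, …, x̃). Then ‖(1/m) Σ_{i=1}^m ∇_x f_i(x, y_i) − (1/m) Σ_{i=1}^m ∇_x f_i(x̃, ỹ_i)‖² + (L²/(4m)) Σ_{i=1}^m ‖Σ_{j=1}^m (w_{ij} − δ_{ij})(y_j − ỹ_j)‖² ≤ L²(4κ² + 1) · (‖x − x̃‖² + Σ_{i=1}^m ‖λ_i − λ̃_i‖²), where κ = L/μ. (That is, the function P(x, Λ) = max_Y Φ((x,…,x), Λ, Y) is L_P-smooth with L_P = L√(4κ² + 1), the left-hand side being the squared norm of the difference of its gradients given by Danskin's theorem.) -/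

import Mathlib

open scoped BigOperators RealInnerProductSpace


lemma enorm_sq {n : ℕ} (v : EuclideanSpace ℝ (Fin n)) : ‖v‖ ^ 2 = ∑ k, (v k) ^ 2 := by
  rw [EuclideanSpace.norm_eq, Real.sq_sqrt (by positivity)]
  simp [sq_abs]

lemma block_bound {m n : ℕ} (c : Fin m → Fin m → ℝ)
    (hc : ∀ v : Fin m → ℝ, ∑ i, (∑ j, c i j * v j) ^ 2 ≤ 4 * ∑ i, (v i) ^ 2)
    (V : Fin m → EuclideanSpace ℝ (Fin n)) :
    ∑ i, ‖∑ j, c i j • V j‖ ^ 2 ≤ 4 * ∑ i, ‖V i‖ ^ 2 := by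
  simp only [enorm_sq]
  have happ : ∀ i k, ((∑ j, c i j • V j) k) = ∑ j, c i j * V j k := by
    intro i k
    rw [WithLp.ofLp_sum, Finset.sum_apply]
    simp [PiLp.smul_apply]
  calc ∑ i, ∑ k, ((∑ j, c i j • V j) k) ^ 2
      = ∑ k, ∑ i, (∑ j, c i j * V j k) ^ 2 := by
        simp only [happ]; exact Finset.sum_comm
    _ ≤ ∑ k : Fin n, 4 * ∑ j, (V j k) ^ 2 := Finset.sum_le_sum fun k _ => hc fun j => V j k
    _ = 4 * ∑ j, ∑ k, (V j k) ^ 2 := by rw [← Finset.mul_sum, Finset.sum_comm]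

lemma sum_inner_ge {m n : ℕ} (a b : Fin m → EuclideanSpace ℝ (Fin n)) :
    -(Real.sqrt (∑ i, ‖a i‖ ^ 2) * Real.sqrt (∑ i, ‖b i‖ ^ 2)) ≤ ∑ i, ⟪a i, b i⟫ := by
  have h1 : ∑ i, ⟪a i, b i⟫ ≥ -∑ i, ‖a i‖ * ‖b i‖ := by
    rw [← Finset.sum_neg_distrib]
    refine Finset.sum_le_sum fun i _ => ?_
    have := abs_real_inner_le_norm (a i) (b i)
    rw [abs_le] at this; exact this.1
  have h2 : (∑ i, ‖a i‖ * ‖b i‖) ^ 2 ≤ (∑ i, ‖a i‖ ^ 2) * ∑ i, ‖b i‖ ^ 2 :=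
    Finset.sum_mul_sq_le_sq_mul_sq _ _ _
  have h3 : ∑ i, ‖a i‖ * ‖b i‖ ≤ Real.sqrt (∑ i, ‖a i‖ ^ 2) * Real.sqrt (∑ i, ‖b i‖ ^ 2) := by
    have h4 : (0:ℝ) ≤ ∑ i, ‖a i‖ * ‖b i‖ :=
      Finset.sum_nonneg fun i _ => mul_nonneg (norm_nonneg _) (norm_nonneg _)
    calc ∑ i, ‖a i‖ * ‖b i‖ = Real.sqrt ((∑ i, ‖a i‖ * ‖b i‖) ^ 2) := (Real.sqrt_sq h4).symm
      _ ≤ Real.sqrt ((∑ i, ‖a i‖ ^ 2) * ∑ i, ‖b i‖ ^ 2) := Real.sqrt_le_sqrt h2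
      _ = _ := Real.sqrt_mul (by positivity) _
  linarith

lemma sum_norm_le {m n : ℕ} (a : Fin m → EuclideanSpace ℝ (Fin n)) :
    ∑ i, ‖a i‖ ≤ Real.sqrt (m : ℝ) * Real.sqrt (∑ i, ‖a i‖ ^ 2) := by
  have h2 : (∑ i, (1:ℝ) * ‖a i‖) ^ 2 ≤ (∑ _i : Fin m, (1:ℝ) ^ 2) * ∑ i, ‖a i‖ ^ 2 :=
    Finset.sum_mul_sq_le_sq_mul_sq _ _ _
  simp only [one_mul, one_pow, Finset.sum_const, Finset.card_univ, Fintype.card_fin,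
    nsmul_eq_mul, mul_one] at h2
  have h4 : (0:ℝ) ≤ ∑ i, ‖a i‖ := Finset.sum_nonneg fun i _ => norm_nonneg _
  calc ∑ i, ‖a i‖ = Real.sqrt ((∑ i, ‖a i‖) ^ 2) := (Real.sqrt_sq h4).symm
    _ ≤ Real.sqrt ((m:ℝ) * ∑ i, ‖a i‖ ^ 2) := Real.sqrt_le_sqrt h2
    _ = _ := Real.sqrt_mul (by positivity) _

lemma sq_sum_norm_le {m n : ℕ} (a : Fin m → EuclideanSpace ℝ (Fin n)) :
    ‖∑ i, a i‖ ^ 2 ≤ (m : ℝ) * ∑ i, ‖a i‖ ^ 2 := by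
  have h1 : ‖∑ i, a i‖ ≤ ∑ i, ‖a i‖ := norm_sum_le _ _
  have h2 : (∑ i, (1:ℝ) * ‖a i‖) ^ 2 ≤ (∑ _i : Fin m, (1:ℝ) ^ 2) * ∑ i, ‖a i‖ ^ 2 :=
    Finset.sum_mul_sq_le_sq_mul_sq _ _ _
  simp only [one_mul, one_pow, Finset.sum_const, Finset.card_univ, Fintype.card_fin,
    nsmul_eq_mul, mul_one] at h2
  have h3 : ‖∑ i, a i‖ ^ 2 ≤ (∑ i, ‖a i‖) ^ 2 := pow_le_pow_left₀ (norm_nonneg _) h1 2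
  linarith


-- (aux lemmas assumed present; will concat)
section Main
variable {m n₁ n₂ : ℕ}

-- core estimate: Σ‖Δy‖² bound
set_option maxHeartbeats 1000000 in
lemma core_bound (hm : 0 < m)
    (L μ : ℝ) (hμ : 0 < μ) (hLμ : μ ≤ L)
    (Gy : Fin m → EuclideanSpace ℝ (Fin n₁) → EuclideanSpace ℝ (Fin n₂) →
      EuclideanSpace ℝ (Fin n₂))
    (Gylip : ∀ i x x' y, ‖Gy i x y - Gy i x' y‖ ≤ L * ‖x - x'‖)
    (hconc : ∀ i x y y', ⟪y - y', Gy i x y - Gy i x y'⟫ ≤ -μ * ‖y - y'‖ ^ 2)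
    (h : EuclideanSpace ℝ (Fin n₂) → ℝ)
    (w : Fin m → Fin m → ℝ)
    (hWIt : ∀ v : Fin m → ℝ,
      ∑ i, (∑ j, (w j i - if i = j then 1 else 0) * v j) ^ 2 ≤ 4 * ∑ i, (v i) ^ 2)
    (x x' : EuclideanSpace ℝ (Fin n₁))
    (Λ Λ' : Fin m → EuclideanSpace ℝ (Fin n₂))
    (Y Y' : Fin m → EuclideanSpace ℝ (Fin n₂))
    (hY : ∃ ζ : Fin m → EuclideanSpace ℝ (Fin n₂),
      (∀ i, ∀ z, h (Y i) + ⟪ζ i, z - Y i⟫ ≤ h z) ∧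
      (∀ i, (1 / (m : ℝ)) • (Gy i x (Y i) - ζ i)
          = (L / (2 * Real.sqrt (m : ℝ))) •
              ∑ j, (w j i - if i = j then 1 else 0) • Λ j))
    (hY' : ∃ ζ : Fin m → EuclideanSpace ℝ (Fin n₂),
      (∀ i, ∀ z, h (Y' i) + ⟪ζ i, z - Y' i⟫ ≤ h z) ∧
      (∀ i, (1 / (m : ℝ)) • (Gy i x' (Y' i) - ζ i)
          = (L / (2 * Real.sqrt (m : ℝ))) •
              ∑ j, (w j i - if i = j then 1 else 0) • Λ' j)) :
    μ ^ 2 * (∑ i, ‖Y i - Y' i‖ ^ 2)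
      ≤ 2 * L ^ 2 * m * (‖x - x'‖ ^ 2 + ∑ i, ‖Λ i - Λ' i‖ ^ 2) := by
  obtain ⟨ζ, hζsub, hζeq⟩ := hY
  obtain ⟨ζ', hζ'sub, hζ'eq⟩ := hY'
  set A := ∑ i, ‖Y i - Y' i‖ ^ 2 with hAdef
  set B := ∑ i, ‖Λ i - Λ' i‖ ^ 2 with hBdef
  set d := ‖x - x'‖ with hddef
  have hm' : (0:ℝ) < m := by exact_mod_cast hm
  have hL : (0:ℝ) < L := lt_of_lt_of_le hμ hLμ
  have hr : (0:ℝ) < Real.sqrt m := Real.sqrt_pos.2 hm'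
  have hr2 : (Real.sqrt m) ^ 2 = (m:ℝ) := Real.sq_sqrt hm'.le
  set c := L / (2 * Real.sqrt m) with hcdef
  have hc : 0 < c := by positivity
  set cw : Fin m → Fin m → ℝ := fun j i => w j i - if i = j then 1 else 0 with hcw
  -- per-i equality
  have heq : ∀ i, (1/(m:ℝ)) • (Gy i x (Y i) - Gy i x' (Y' i)) - (1/(m:ℝ)) • (ζ i - ζ' i)
      = c • ∑ j, cw j i • (Λ j - Λ' j) := by
    intro i
    have key : (1/(m:ℝ)) • (Gy i x (Y i) - ζ i) - (1/(m:ℝ)) • (Gy i x' (Y' i) - ζ' i)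
        = c • (∑ j, cw j i • Λ j) - c • (∑ j, cw j i • Λ' j) := by
      rw [hζeq i, hζ'eq i]
    calc (1/(m:ℝ)) • (Gy i x (Y i) - Gy i x' (Y' i)) - (1/(m:ℝ)) • (ζ i - ζ' i)
        = (1/(m:ℝ)) • (Gy i x (Y i) - ζ i) - (1/(m:ℝ)) • (Gy i x' (Y' i) - ζ' i) := by
          simp only [smul_sub]; abel
      _ = c • (∑ j, cw j i • Λ j) - c • (∑ j, cw j i • Λ' j) := key
      _ = c • ∑ j, cw j i • (Λ j - Λ' j) := by
          simp only [smul_sub, Finset.sum_sub_distrib]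
  -- inner with Δy and sum
  set u : Fin m → EuclideanSpace ℝ (Fin n₂) := fun i => ∑ j, cw j i • (Λ j - Λ' j) with hu
  have hinner : (1/(m:ℝ)) * ((∑ i, ⟪Y i - Y' i, Gy i x (Y i) - Gy i x' (Y' i)⟫)
      - ∑ i, ⟪Y i - Y' i, ζ i - ζ' i⟫) = c * ∑ i, ⟪Y i - Y' i, u i⟫ := by
    rw [← Finset.sum_sub_distrib, Finset.mul_sum, Finset.mul_sum]
    refine Finset.sum_congr rfl fun i _ => ?_
    have hv : ⟪Y i - Y' i, (1/(m:ℝ)) • (Gy i x (Y i) - Gy i x' (Y' i))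
        - (1/(m:ℝ)) • (ζ i - ζ' i)⟫ = ⟪Y i - Y' i, c • u i⟫ := by rw [heq i]
    rw [inner_sub_right, real_inner_smul_right, real_inner_smul_right,
      real_inner_smul_right] at hv
    rw [mul_sub]
    linarith [hv]
  -- monotonicity of subgradients
  have hζpos : ∀ i, (0:ℝ) ≤ ⟪Y i - Y' i, ζ i - ζ' i⟫ := by
    intro i
    have h1 := hζsub i (Y' i)
    have h2 := hζ'sub i (Y i)
    have e1 : ⟪ζ i, Y' i - Y i⟫ + ⟪ζ' i, Y i - Y' i⟫ ≤ 0 := by linarith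
    have t2 : ⟪ζ' i, Y i - Y' i⟫ = ⟪Y i - Y' i, ζ' i⟫ := real_inner_comm _ _
    have t3 : ⟪Y i - Y' i, ζ i - ζ' i⟫ = ⟪Y i - Y' i, ζ i⟫ - ⟪Y i - Y' i, ζ' i⟫ :=
      inner_sub_right _ _ _
    have t5 : ⟪ζ i, Y' i - Y i⟫ = -⟪Y i - Y' i, ζ i⟫ := by
      rw [← neg_sub (Y i) (Y' i), inner_neg_right, real_inner_comm]
    linarith
  -- strong concavity + Lipschitz bound
  have hSG : ∑ i, ⟪Y i - Y' i, Gy i x (Y i) - Gy i x' (Y' i)⟫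
      ≤ -μ * A + L * d * ∑ i, ‖Y i - Y' i‖ := by
    have hper : ∀ i : Fin m, ⟪Y i - Y' i, Gy i x (Y i) - Gy i x' (Y' i)⟫
        ≤ -μ * ‖Y i - Y' i‖ ^ 2 + L * d * ‖Y i - Y' i‖ := by
      intro i
      have hsplit : Gy i x (Y i) - Gy i x' (Y' i)
          = (Gy i x (Y i) - Gy i x (Y' i)) + (Gy i x (Y' i) - Gy i x' (Y' i)) := by abel
      rw [hsplit, inner_add_right]
      have b1 := hconc i x (Y i) (Y' i)
      have b2 : ⟪Y i - Y' i, Gy i x (Y' i) - Gy i x' (Y' i)⟫ ≤ ‖Y i - Y' i‖ * (L * d) := by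
        calc ⟪Y i - Y' i, Gy i x (Y' i) - Gy i x' (Y' i)⟫
            ≤ ‖Y i - Y' i‖ * ‖Gy i x (Y' i) - Gy i x' (Y' i)‖ := real_inner_le_norm _ _
          _ ≤ ‖Y i - Y' i‖ * (L * d) :=
              mul_le_mul_of_nonneg_left (Gylip i x x' (Y' i)) (norm_nonneg _)
      nlinarith [b1, b2]
    calc ∑ i, ⟪Y i - Y' i, Gy i x (Y i) - Gy i x' (Y' i)⟫
        ≤ ∑ i, (-μ * ‖Y i - Y' i‖ ^ 2 + L * d * ‖Y i - Y' i‖) :=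
          Finset.sum_le_sum fun i _ => hper i
      _ = -μ * A + L * d * ∑ i, ‖Y i - Y' i‖ := by
          rw [hAdef, Finset.sum_add_distrib, ← Finset.mul_sum, ← Finset.mul_sum]
  -- RHS bound
  have hU : ∑ i, ‖u i‖ ^ 2 ≤ 4 * B := by
    have := block_bound (fun i j => cw j i) hWIt (fun j => Λ j - Λ' j)
    simpa [hu, hBdef] using this
  have hA0 : (0:ℝ) ≤ A := Finset.sum_nonneg fun i _ => sq_nonneg _
  have hB0 : (0:ℝ) ≤ B := Finset.sum_nonneg fun i _ => sq_nonneg _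
  set a := Real.sqrt A with hadef
  set b := Real.sqrt B with hbdef
  have ha2 : a ^ 2 = A := Real.sq_sqrt hA0
  have hb2 : b ^ 2 = B := Real.sq_sqrt hB0
  have ha0 : 0 ≤ a := Real.sqrt_nonneg _
  have hb0 : 0 ≤ b := Real.sqrt_nonneg _
  have hSΛ : -(a * (2 * b)) ≤ ∑ i, ⟪Y i - Y' i, u i⟫ := by
    have h1 := sum_inner_ge (fun i => Y i - Y' i) u
    have h2 : Real.sqrt (∑ i, ‖u i‖ ^ 2) ≤ 2 * b := by
      calc Real.sqrt (∑ i, ‖u i‖ ^ 2) ≤ Real.sqrt (4 * B) := Real.sqrt_le_sqrt hU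
        _ = 2 * b := by
          rw [hbdef, show (4:ℝ) * B = 2 ^ 2 * B by ring,
            Real.sqrt_mul (by positivity) B, Real.sqrt_sq (by norm_num : (0:ℝ) ≤ 2)]
    have h3 : -(a * (2 * b)) ≤ -(Real.sqrt (∑ i, ‖Y i - Y' i‖ ^ 2) * Real.sqrt (∑ i, ‖u i‖ ^ 2)) := by
      rw [neg_le_neg_iff]
      exact mul_le_mul_of_nonneg_left h2 ha0
    linarith
  have hsum : ∑ i, ‖Y i - Y' i‖ ≤ Real.sqrt m * a := sum_norm_le _
  -- combine
  have hd0 : 0 ≤ d := norm_nonneg _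
  have hkey : μ * A ≤ L * Real.sqrt m * a * (d + b) := by
    have e1 : (1/(m:ℝ)) * ((-μ * A + L * d * ∑ i, ‖Y i - Y' i‖)
        - ∑ i, ⟪Y i - Y' i, ζ i - ζ' i⟫) ≥ c * (-(a * (2 * b))) := by
      have hge : (1/(m:ℝ)) * ((∑ i, ⟪Y i - Y' i, Gy i x (Y i) - Gy i x' (Y' i)⟫)
          - ∑ i, ⟪Y i - Y' i, ζ i - ζ' i⟫) ≥ c * (-(a * (2 * b))) := by
        rw [hinner]
        exact mul_le_mul_of_nonneg_left hSΛ hc.le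
      have hmono : (1/(m:ℝ)) * ((∑ i, ⟪Y i - Y' i, Gy i x (Y i) - Gy i x' (Y' i)⟫)
          - ∑ i, ⟪Y i - Y' i, ζ i - ζ' i⟫)
          ≤ (1/(m:ℝ)) * ((-μ * A + L * d * ∑ i, ‖Y i - Y' i‖)
            - ∑ i, ⟪Y i - Y' i, ζ i - ζ' i⟫) := by
        apply mul_le_mul_of_nonneg_left _ (by positivity)
        linarith
      linarith
    have hζs : 0 ≤ ∑ i, ⟪Y i - Y' i, ζ i - ζ' i⟫ := Finset.sum_nonneg fun i _ => hζpos i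
    -- from e1: -2 c a b ≤ (1/m)(-μA + Ld Σ‖Δy‖)  (dropping -ζ term which is ≤ 0 side)
    have e2 : c * (-(a * (2*b))) ≤ (1/(m:ℝ)) * (-μ * A + L * d * ∑ i, ‖Y i - Y' i‖) := by
      have : (1/(m:ℝ)) * ((-μ * A + L * d * ∑ i, ‖Y i - Y' i‖)
          - ∑ i, ⟪Y i - Y' i, ζ i - ζ' i⟫)
          ≤ (1/(m:ℝ)) * (-μ * A + L * d * ∑ i, ‖Y i - Y' i‖) := by
        apply mul_le_mul_of_nonneg_left _ (by positivity)
        linarith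
      linarith
    -- multiply by m
    have hm0 : (m:ℝ) ≠ 0 := hm'.ne'
    have e3 : μ * A ≤ L * d * (∑ i, ‖Y i - Y' i‖) + c * (m * (a * (2*b))) := by
      have e3' := mul_le_mul_of_nonneg_left e2 hm'.le
      have hre1 : (m:ℝ) * ((1/(m:ℝ)) * (-μ * A + L * d * ∑ i, ‖Y i - Y' i‖))
          = -μ * A + L * d * ∑ i, ‖Y i - Y' i‖ := by field_simp
      have hre : (m:ℝ) * (c * -(a * (2*b))) = -(c * (m * (a * (2*b)))) := by ring
      rw [hre, hre1] at e3'
      linarith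
    have hcm : c * (m * (a * (2*b))) = L * Real.sqrt m * a * b := by
      have hLc : c * (2 * Real.sqrt (m:ℝ)) = L := by
        rw [hcdef]
        field_simp
      have hmm : (m:ℝ) = Real.sqrt (m:ℝ) * Real.sqrt (m:ℝ) := (Real.mul_self_sqrt hm'.le).symm
      calc c * (m * (a * (2 * b)))
          = c * (2 * Real.sqrt (m:ℝ)) * (Real.sqrt (m:ℝ) * a * b) := by
            conv_lhs => rw [hmm]
            ring
        _ = L * Real.sqrt (m:ℝ) * a * b := by rw [hLc]; ring
    have e4 : L * d * (∑ i, ‖Y i - Y' i‖) ≤ L * d * (Real.sqrt m * a) := by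
      apply mul_le_mul_of_nonneg_left hsum (by positivity)
    calc μ * A ≤ L * d * (Real.sqrt m * a) + L * Real.sqrt m * a * b := by
          rw [← hcm]; linarith
      _ = L * Real.sqrt m * a * (d + b) := by ring
  -- square it
  rcases eq_or_lt_of_le ha0 with hz | hapos
  · have : A = 0 := by rw [← ha2, ← hz]; ring
    rw [this]
    have : (0:ℝ) ≤ 2 * L^2 * m * (d^2 + B) :=
      mul_nonneg (mul_nonneg (mul_nonneg (by norm_num) (sq_nonneg L)) hm'.le)
        (add_nonneg (sq_nonneg d) hB0)
    linarith
  · have hkey2 : μ * a ≤ L * Real.sqrt m * (d + b) := by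
      have : μ * (a * a) ≤ (L * Real.sqrt m * (d + b)) * a := by
        have : μ * A = μ * (a * a) := by rw [← ha2]; ring
        nlinarith [hkey]
      exact le_of_mul_le_mul_right (by nlinarith) hapos
    have : μ^2 * A = (μ * a)^2 := by rw [← ha2]; ring
    rw [this]
    have hB' : B = b^2 := hb2.symm
    rw [hB']
    have hsq : (μ*a)^2 ≤ (L * Real.sqrt (m:ℝ) * (d+b))^2 := by
      have h0 : 0 ≤ μ * a := mul_nonneg hμ.le ha0
      exact pow_le_pow_left₀ h0 hkey2 2
    have hexp : (L * Real.sqrt (m:ℝ) * (d+b))^2 = L^2 * m * (d+b)^2 := by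
      rw [mul_pow, mul_pow, hr2]
    nlinarith [hsq, hexp, mul_nonneg (mul_nonneg (sq_nonneg L) hm'.le) (sq_nonneg (d - b))]
end Main


/-- Smoothness of `P(x, Λ) = max_Y Φ((x,…,x), Λ, Y)`: the squared norm of
the difference of the Danskin gradients of `P` at `(x, Λ)` and `(x̃, Λ̃)` is bounded by
`L_P² (‖x − x̃‖² + ‖Λ − Λ̃‖_F²)` with `L_P = L√(4κ² + 1)`, `κ = L/μ`. -/
theorem dgdmax_P_smooth
    {m n₁ n₂ : ℕ} (hm : 0 < m) (hn₁ : 0 < n₁) (hn₂ : 0 < n₂)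
    (L μ : ℝ) (hμ : 0 < μ) (hLμ : μ ≤ L)
    (f : Fin m → EuclideanSpace ℝ (Fin n₁) → EuclideanSpace ℝ (Fin n₂) → ℝ)
    (Gx : Fin m → EuclideanSpace ℝ (Fin n₁) → EuclideanSpace ℝ (Fin n₂) →
      EuclideanSpace ℝ (Fin n₁))
    (Gy : Fin m → EuclideanSpace ℝ (Fin n₁) → EuclideanSpace ℝ (Fin n₂) →
      EuclideanSpace ℝ (Fin n₂))
    (hGx : ∀ i x y, HasGradientAt (fun x' => f i x' y) (Gx i x y) x)
    (hGy : ∀ i x y, HasGradientAt (fun y' => f i x y') (Gy i x y) y)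
    (hLip : ∀ i x y x' y',
      ‖Gx i x y - Gx i x' y'‖ ^ 2 + ‖Gy i x y - Gy i x' y'‖ ^ 2
        ≤ L ^ 2 * (‖x - x'‖ ^ 2 + ‖y - y'‖ ^ 2))
    (hconc : ∀ i x y y', ⟪y - y', Gy i x y - Gy i x y'⟫ ≤ -μ * ‖y - y'‖ ^ 2)
    (h : EuclideanSpace ℝ (Fin n₂) → ℝ) (hconv : ConvexOn ℝ Set.univ h)
    (w : Fin m → Fin m → ℝ)
    -- `‖W − I‖₂ ≤ 2` (squared form), for `W − I` and its transpose
    (hWI : ∀ v : Fin m → ℝ,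
      ∑ i, (∑ j, (w i j - if i = j then 1 else 0) * v j) ^ 2 ≤ 4 * ∑ i, (v i) ^ 2)
    (hWIt : ∀ v : Fin m → ℝ,
      ∑ i, (∑ j, (w j i - if i = j then 1 else 0) * v j) ^ 2 ≤ 4 * ∑ i, (v i) ^ 2)
    (x x' : EuclideanSpace ℝ (Fin n₁))
    (Λ Λ' : Fin m → EuclideanSpace ℝ (Fin n₂))
    (Y Y' : Fin m → EuclideanSpace ℝ (Fin n₂))
    -- `Y` satisfies the first-order maximality condition for `Φ((x,…,x), Λ, ·)`
    (hY : ∃ ζ : Fin m → EuclideanSpace ℝ (Fin n₂),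
      (∀ i, ∀ z, h (Y i) + ⟪ζ i, z - Y i⟫ ≤ h z) ∧
      (∀ i, (1 / (m : ℝ)) • (Gy i x (Y i) - ζ i)
          = (L / (2 * Real.sqrt (m : ℝ))) •
              ∑ j, (w j i - if i = j then 1 else 0) • Λ j))
    -- `Ỹ` satisfies the first-order maximality condition for `Φ((x̃,…,x̃), Λ̃, ·)`
    (hY' : ∃ ζ : Fin m → EuclideanSpace ℝ (Fin n₂),
      (∀ i, ∀ z, h (Y' i) + ⟪ζ i, z - Y' i⟫ ≤ h z) ∧
      (∀ i, (1 / (m : ℝ)) • (Gy i x' (Y' i) - ζ i)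
          = (L / (2 * Real.sqrt (m : ℝ))) •
              ∑ j, (w j i - if i = j then 1 else 0) • Λ' j)) :
    ‖(1 / (m : ℝ)) • ∑ i, Gx i x (Y i) - (1 / (m : ℝ)) • ∑ i, Gx i x' (Y' i)‖ ^ 2
      + (L ^ 2 / (4 * (m : ℝ))) *
          ∑ i, ‖∑ j, (w i j - if i = j then 1 else 0) • (Y j - Y' j)‖ ^ 2
      ≤ L ^ 2 * (4 * (L / μ) ^ 2 + 1) * (‖x - x'‖ ^ 2 + ∑ i, ‖Λ i - Λ' i‖ ^ 2) := by
  have hm' : (0:ℝ) < m := by exact_mod_cast hm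
  have hm0 : (m:ℝ) ≠ 0 := hm'.ne'
  have hL : (0:ℝ) < L := lt_of_lt_of_le hμ hLμ
  have Gylip : ∀ (i : Fin m) a a' y, ‖Gy i a y - Gy i a' y‖ ≤ L * ‖a - a'‖ := by
    intro i a a' y
    have hk := hLip i a y a' y
    simp only [sub_self, norm_zero] at hk
    nlinarith [norm_nonneg (Gy i a y - Gy i a' y), sq_nonneg ‖Gx i a y - Gx i a' y‖,
      mul_nonneg hL.le (norm_nonneg (a - a')), sq_nonneg (a := ‖a - a'‖)]
  have hcore := core_bound hm L μ hμ hLμ Gy Gylip hconc h w hWIt x x' Λ Λ' Y Y' hY hY'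
  set A := ∑ i, ‖Y i - Y' i‖ ^ 2 with hAdef
  set B := ∑ i, ‖Λ i - Λ' i‖ ^ 2 with hBdef
  set d := ‖x - x'‖ with hddef
  have hA0 : (0:ℝ) ≤ A := Finset.sum_nonneg fun i _ => sq_nonneg _
  have hB0 : (0:ℝ) ≤ B := Finset.sum_nonneg fun i _ => sq_nonneg _
  -- second term
  have hTB : ∑ i, ‖∑ j, (w i j - if i = j then 1 else 0) • (Y j - Y' j)‖ ^ 2 ≤ 4 * A :=
    block_bound _ hWI _
  -- first term
  have hGsum : ∑ i, ‖Gx i x (Y i) - Gx i x' (Y' i)‖ ^ 2 ≤ L ^ 2 * ((m:ℝ) * d ^ 2 + A) := by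
    calc ∑ i, ‖Gx i x (Y i) - Gx i x' (Y' i)‖ ^ 2
        ≤ ∑ i, L ^ 2 * (d ^ 2 + ‖Y i - Y' i‖ ^ 2) := by
          refine Finset.sum_le_sum fun i _ => ?_
          have := hLip i x (Y i) x' (Y' i)
          nlinarith [sq_nonneg ‖Gy i x (Y i) - Gy i x' (Y' i)‖]
      _ = L ^ 2 * ((m:ℝ) * d ^ 2 + A) := by
          rw [← Finset.mul_sum, Finset.sum_add_distrib, Finset.sum_const, Finset.card_univ,
            Fintype.card_fin, nsmul_eq_mul, hAdef]
  have hTA : ‖(1 / (m:ℝ)) • ∑ i, Gx i x (Y i) - (1 / (m:ℝ)) • ∑ i, Gx i x' (Y' i)‖ ^ 2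
      ≤ (1 / (m:ℝ)) * (L ^ 2 * ((m:ℝ) * d ^ 2 + A)) := by
    have hdiff : (1/(m:ℝ)) • ∑ i, Gx i x (Y i) - (1/(m:ℝ)) • ∑ i, Gx i x' (Y' i)
        = (1/(m:ℝ)) • ∑ i, (Gx i x (Y i) - Gx i x' (Y' i)) := by
      rw [Finset.sum_sub_distrib, smul_sub]
    rw [hdiff, norm_smul, mul_pow]
    have habs : ‖(1/(m:ℝ))‖ ^ 2 = (1/(m:ℝ))^2 := by
      rw [Real.norm_eq_abs, sq_abs]
    rw [habs]
    have h1 := sq_sum_norm_le (fun i => Gx i x (Y i) - Gx i x' (Y' i))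
    have h2 : (1/(m:ℝ))^2 * ‖∑ i, (Gx i x (Y i) - Gx i x' (Y' i))‖ ^ 2
        ≤ (1/(m:ℝ))^2 * ((m:ℝ) * (L ^ 2 * ((m:ℝ) * d ^ 2 + A))) := by
      apply mul_le_mul_of_nonneg_left _ (by positivity)
      calc ‖∑ i, (Gx i x (Y i) - Gx i x' (Y' i))‖ ^ 2
          ≤ (m:ℝ) * ∑ i, ‖Gx i x (Y i) - Gx i x' (Y' i)‖ ^ 2 := h1
        _ ≤ (m:ℝ) * (L ^ 2 * ((m:ℝ) * d ^ 2 + A)) :=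
            mul_le_mul_of_nonneg_left hGsum hm'.le
    have h3 : (1/(m:ℝ))^2 * ((m:ℝ) * (L ^ 2 * ((m:ℝ) * d ^ 2 + A)))
        = (1 / (m:ℝ)) * (L ^ 2 * ((m:ℝ) * d ^ 2 + A)) := by
      field_simp
    linarith
  -- core consequence
  have hAm : (1 / (m:ℝ)) * (L ^ 2 * A) ≤ 2 * L ^ 2 * (L/μ) ^ 2 * (d ^ 2 + B) := by
    have hμ2 : (0:ℝ) < μ ^ 2 := by positivity
    have step := mul_le_mul_of_nonneg_left hcore (le_of_lt (by positivity : (0:ℝ) < L^2/(m:ℝ)))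
    have e1 : (L^2/(m:ℝ)) * (μ^2 * A) = μ^2 * ((1/(m:ℝ)) * (L^2 * A)) := by ring
    have e2 : (L^2/(m:ℝ)) * (2 * L^2 * (m:ℝ) * (d^2 + B))
        = μ^2 * (2 * L^2 * (L/μ)^2 * (d^2 + B)) := by
      field_simp
    rw [e1, e2] at step
    exact le_of_mul_le_mul_left step hμ2
  have hTB2 : (L ^ 2 / (4 * (m:ℝ))) *
      ∑ i, ‖∑ j, (w i j - if i = j then 1 else 0) • (Y j - Y' j)‖ ^ 2
      ≤ (1 / (m:ℝ)) * (L ^ 2 * A) := by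
    calc (L ^ 2 / (4 * (m:ℝ))) *
        ∑ i, ‖∑ j, (w i j - if i = j then 1 else 0) • (Y j - Y' j)‖ ^ 2
        ≤ (L ^ 2 / (4 * (m:ℝ))) * (4 * A) :=
          mul_le_mul_of_nonneg_left hTB (by positivity)
      _ = (1 / (m:ℝ)) * (L ^ 2 * A) := by field_simp
  have hsplit : (1 / (m:ℝ)) * (L ^ 2 * ((m:ℝ) * d ^ 2 + A))
      = L ^ 2 * d ^ 2 + (1 / (m:ℝ)) * (L ^ 2 * A) := by
    field_simp
  have hfinal : L ^ 2 * d ^ 2 + 2 * ((1 / (m:ℝ)) * (L ^ 2 * A))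
      ≤ L ^ 2 * (4 * (L/μ) ^ 2 + 1) * (d ^ 2 + B) := by
    nlinarith [hAm, mul_nonneg (sq_nonneg L) hB0]
  linarith [hTA, hTB2, hsplit ▸ hTA, hfinal]
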